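/- Let f̂_1 and f̂_2 be two Vecchia approximations of f with conditioning index vectors g_1 and g_2, respectively. If g_1(i) ⊆ g_2(i) for all i = 1,…,N, then KL(f‖f̂_1) ≥ KL(f‖f̂_2). (Proposition 1, part 1.) -/

import Mathlib

open MeasureTheory Real Finset Matrix

noncomputable section

/-- Density of the one-dimensional normal distribution `N(μ, v)` evaluated at `t`. -/
def gauss1 (μ v t : ℝ) : ℝ :=
  (Real.sqrt (2 * π * v))⁻¹ * Real.exp (-((t - μ) ^ 2) / (2 * v))

variable {ι : Type*} [Fintype ι] [DecidableEq ι]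

/-- Joint density of the multivariate normal distribution `N(μ, K)` on `ι → ℝ`. -/
def gaussDensity (μ : ι → ℝ) (K : Matrix ι ι ℝ) (x : ι → ℝ) : ℝ :=
  (Real.sqrt ((2 * π) ^ (Fintype.card ι) * K.det))⁻¹ *
    Real.exp (-(dotProduct (x - μ) (K⁻¹ *ᵥ (x - μ))) / 2)

/-- Submatrix of `K` with rows and columns in the index set `G`. -/
def subm (K : Matrix ι ι ℝ) (G : Finset ι) : Matrix G G ℝ :=
  Matrix.of fun j k => K j.1 k.1

/-- Gaussian conditional mean `E(x i | x_G)` for `x ~ N(μ, K)`, as a function of `x`. -/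
def condMean (μ : ι → ℝ) (K : Matrix ι ι ℝ) (i : ι) (G : Finset ι) (x : ι → ℝ) : ℝ :=
  μ i + dotProduct (fun j : G => K i j.1)
    ((subm K G)⁻¹ *ᵥ fun j : G => x j.1 - μ j.1)

/-- Gaussian conditional variance `Var(x i | x_G)` for `x ~ N(μ, K)`
(it does not depend on the value of `x_G`). -/
def condVar (K : Matrix ι ι ℝ) (i : ι) (G : Finset ι) : ℝ :=
  K i i - dotProduct (fun j : G => K i j.1)
    ((subm K G)⁻¹ *ᵥ fun j : G => K j.1 i)

/-- Gaussian conditional covariance `Cov(x a, x b | x_G)` for `x ~ N(0, K)`. -/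
def condCov (K : Matrix ι ι ℝ) (a b : ι) (G : Finset ι) : ℝ :=
  K a b - dotProduct (fun j : G => K a j.1)
    ((subm K G)⁻¹ *ᵥ fun j : G => K j.1 b)

/-- The exact Gaussian conditional density `f(x i | x_G)` for `x ~ N(μ, K)`. -/
def condDens (μ : ι → ℝ) (K : Matrix ι ι ℝ) (i : ι) (G : Finset ι) (x : ι → ℝ) : ℝ :=
  gauss1 (condMean μ K i G x) (condVar K i G) (x i)

/-- The general Vecchia approximation `f̂(x) = ∏ i, f(x i | x_{g i})` of `N(μ, K)`. -/
def vecchia (μ : ι → ℝ) (K : Matrix ι ι ℝ) (g : ι → Finset ι) (x : ι → ℝ) : ℝ :=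
  ∏ i, condDens μ K i (g i) x

/-- Kullback–Leibler divergence `KL(f ‖ g) = ∫ f log(f/g)` between densities on `ι → ℝ`. -/
def KLdiv (f g : (ι → ℝ) → ℝ) : ℝ :=
  ∫ x : ι → ℝ, f x * Real.log (f x / g x)


namespace VA

lemma gauss1_eq : gauss1 0 1 = fun t => (Real.sqrt (2 * π))⁻¹ * Real.exp (-(1/2) * t ^ 2) := by
  funext t
  simp only [gauss1, mul_one, sub_zero]
  ring_nf

lemma integrable_gauss1 : Integrable (gauss1 0 1) := by
  rw [gauss1_eq]
  exact (integrable_exp_neg_mul_sq (by norm_num : (0:ℝ) < 1/2)).const_mul _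

lemma integral_gauss1 : ∫ t, gauss1 0 1 t = 1 := by
  rw [gauss1_eq]
  simp only
  rw [integral_const_mul, integral_gaussian, div_div_eq_mul_div, div_one,
    show π * 2 = 2 * π by ring, inv_mul_cancel₀ (by positivity)]

lemma integrable_id_gauss1 : Integrable (fun t => t * gauss1 0 1 t) := by
  rw [gauss1_eq]
  have := (integrable_mul_exp_neg_mul_sq (by norm_num : (0:ℝ) < 1/2)).const_mul (Real.sqrt (2*π))⁻¹
  convert this using 2 with t
  ring

lemma integral_id_gauss1 : ∫ t, t * gauss1 0 1 t = 0 := by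
  have h := integral_neg_eq_self (fun t : ℝ => t * gauss1 0 1 t) volume
  have e : ∀ t : ℝ, -t * gauss1 0 1 (-t) = -(t * gauss1 0 1 t) := by
    intro t; simp only [gauss1_eq, neg_sq]; ring
  simp_rw [e] at h
  rw [integral_neg] at h
  linarith

lemma integrable_sq_gauss1 : Integrable (fun t => t ^ 2 * gauss1 0 1 t) := by
  rw [gauss1_eq]
  have h2 := (integrable_rpow_mul_exp_neg_mul_sq (by norm_num : (0:ℝ) < 1/2)
    (by norm_num : (-1:ℝ) < 2)).const_mul (Real.sqrt (2*π))⁻¹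
  convert h2 using 2 with t
  rw [show ((2:ℝ)) = ((2:ℕ):ℝ) by norm_num, Real.rpow_natCast]
  ring

lemma integral_sq_gauss1 : ∫ t, t ^ 2 * gauss1 0 1 t = 1 := by
  rw [gauss1_eq]
  simp only
  have e : ∀ t : ℝ, t ^ 2 * ((Real.sqrt (2*π))⁻¹ * Real.exp (-(1/2) * t ^ 2))
      = (Real.sqrt (2*π))⁻¹ * (|t| ^ 2 * Real.exp (-(1/2) * t ^ 2)) := by
    intro t; rw [sq_abs]; ring
  simp_rw [e]
  rw [integral_const_mul]
  have habs : ∫ t : ℝ, |t| ^ 2 * Real.exp (-(1/2) * t ^ 2)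
      = 2 * ∫ t in Set.Ioi (0:ℝ), t ^ 2 * Real.exp (-(1/2) * t ^ 2) := by
    rw [← integral_comp_abs (f := fun t => t ^ 2 * Real.exp (-(1/2) * t ^ 2))]
    congr 1 with t
    simp only [sq_abs]
  rw [habs]
  have hIoi : ∫ t in Set.Ioi (0:ℝ), t ^ 2 * Real.exp (-(1/2) * t ^ 2)
      = ((1:ℝ)/2) ^ (-((2:ℝ) + 1) / 2) * (1 / 2) * Real.Gamma (((2:ℝ) + 1) / 2) := by
    have := integral_rpow_mul_exp_neg_mul_rpow (p := 2) (q := 2) (b := 1/2)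
      (by norm_num) (by norm_num) (by norm_num)
    rw [← this]
    refine setIntegral_congr_fun measurableSet_Ioi (fun t ht => ?_)
    norm_num [Real.rpow_natCast]
  rw [hIoi]
  have hGamma : Real.Gamma (((2:ℝ) + 1) / 2) = Real.sqrt π / 2 := by
    rw [show ((2:ℝ) + 1) / 2 = 1/2 + 1 by norm_num, Real.Gamma_add_one (by norm_num),
      Real.Gamma_one_half_eq]
    ring
  rw [hGamma]
  have h12 : ((1:ℝ)/2) ^ (-((2:ℝ) + 1) / 2) = 2 * Real.sqrt 2 := by
    rw [neg_div, one_div, Real.inv_rpow (by norm_num), ← Real.rpow_neg (by norm_num), neg_neg,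
      show ((2:ℝ)+1)/2 = 1 + 1/2 by norm_num, Real.rpow_add (by norm_num),
      Real.rpow_one, ← Real.sqrt_eq_rpow]
  rw [h12, Real.sqrt_mul (by positivity) π]
  rw [eq_comm, ← Real.sqrt_mul_self (by positivity : (0:ℝ) ≤ Real.sqrt 2 * Real.sqrt π)]
  field_simp
  rw [← mul_pow, Real.sqrt_sq (by positivity)]


variable {ι : Type*} [Fintype ι] [DecidableEq ι]

/-- standard gaussian density on `ι → ℝ` -/
def stdG (u : ι → ℝ) : ℝ := ∏ i, gauss1 0 1 (u i)

lemma integrable_stdG : Integrable (stdG (ι := ι)) :=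
  Integrable.fintype_prod (f := fun _ : ι => gauss1 0 1) (fun _ => integrable_gauss1)

lemma integral_stdG : ∫ u : ι → ℝ, stdG u = 1 := by
  rw [show (fun u : ι → ℝ => stdG u) = fun u => ∏ i, gauss1 0 1 (u i) from rfl, MeasureTheory.volume_pi,
    MeasureTheory.integral_fintype_prod_eq_pow (ι := ι) (gauss1 0 1), integral_gauss1, one_pow]

/-- the factor functions for second moments -/
def mom2f (j k i : ι) : ℝ → ℝ := fun t =>
  gauss1 0 1 t * (if j = i then t else 1) * (if k = i then t else 1)

lemma mom2f_prod (j k : ι) (u : ι → ℝ) :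
    (∏ i, mom2f j k i (u i)) = stdG u * (u j * u k) := by
  unfold mom2f stdG
  rw [Finset.prod_mul_distrib, Finset.prod_mul_distrib, Finset.prod_ite_eq,
    Finset.prod_ite_eq]
  simp only [Finset.mem_univ, if_true]
  ring

lemma integrable_mom2f (j k i : ι) : Integrable (mom2f j k i) := by
  unfold mom2f
  by_cases hj : j = i <;> by_cases hk : k = i
  · simp only [if_pos hj, if_pos hk]
    exact integrable_sq_gauss1.congr (Filter.Eventually.of_forall fun t => by ring)
  · simp only [if_pos hj, if_neg hk, mul_one]
    exact integrable_id_gauss1.congr (Filter.Eventually.of_forall fun t => by ring)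
  · simp only [if_neg hj, if_pos hk, mul_one]
    exact integrable_id_gauss1.congr (Filter.Eventually.of_forall fun t => by ring)
  · simp only [if_neg hj, if_neg hk, mul_one]
    exact integrable_gauss1

lemma integrable_stdG_mul (j k : ι) :
    Integrable (fun u : ι → ℝ => stdG u * (u j * u k)) := by
  have := Integrable.fintype_prod (f := mom2f j k) (fun i => integrable_mom2f j k i)
  exact this.congr (Filter.Eventually.of_forall fun u => mom2f_prod j k u)

lemma integral_mom2f (j k i : ι) :
    ∫ t, mom2f j k i t = if j = i then (if k = i then 1 else 0) else (if k = i then 0 else 1) := by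
  unfold mom2f
  by_cases hj : j = i <;> by_cases hk : k = i <;>
    simp only [if_pos, if_neg, hj, hk, if_true, if_false, mul_one]
  · rw [show (fun t : ℝ => gauss1 0 1 t * t * t) = fun t : ℝ => t ^ 2 * gauss1 0 1 t by
      funext t; ring]
    exact integral_sq_gauss1
  · rw [show (fun t : ℝ => gauss1 0 1 t * t) = fun t : ℝ => t * gauss1 0 1 t by
      funext t; ring]
    exact integral_id_gauss1
  · rw [show (fun t : ℝ => gauss1 0 1 t * t) = fun t : ℝ => t * gauss1 0 1 t by
      funext t; ring]
    exact integral_id_gauss1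
  · exact integral_gauss1

lemma integral_stdG_mul (j k : ι) :
    ∫ u : ι → ℝ, stdG u * (u j * u k) = if j = k then 1 else 0 := by
  rw [show (fun u : ι → ℝ => stdG u * (u j * u k)) = fun u => ∏ i, mom2f j k i (u i) by
    funext u; rw [mom2f_prod], MeasureTheory.volume_pi,
    MeasureTheory.integral_fintype_prod_eq_prod (ι := ι) (mom2f j k)]
  simp_rw [integral_mom2f]
  rcases eq_or_ne j k with rfl | hjk
  · rw [if_pos rfl]
    apply Finset.prod_eq_one
    intro i _
    by_cases hj : j = i <;> simp [hj]
  · rw [if_neg hjk]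
    apply Finset.prod_eq_zero (Finset.mem_univ j)
    have hkj : ¬ k = j := fun h => hjk h.symm
    simp [hkj]

lemma integrable_stdG_quad (B : ι → ι → ℝ) :
    Integrable (fun u : ι → ℝ => stdG u * ∑ j, ∑ k, B j k * (u j * u k)) := by
  have : (fun u : ι → ℝ => stdG u * ∑ j, ∑ k, B j k * (u j * u k))
      = fun u => ∑ j, ∑ k, B j k * (stdG u * (u j * u k)) := by
    funext u
    rw [Finset.mul_sum]
    congr 1 with j
    rw [Finset.mul_sum]
    congr 1 with k
    ring
  rw [this]
  exact integrable_finset_sum _ (fun j _ => integrable_finset_sum _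
    (fun k _ => (integrable_stdG_mul j k).const_mul _))

lemma integral_stdG_quad (B : ι → ι → ℝ) :
    ∫ u : ι → ℝ, stdG u * ∑ j, ∑ k, B j k * (u j * u k) = ∑ j, B j j := by
  have e : (fun u : ι → ℝ => stdG u * ∑ j, ∑ k, B j k * (u j * u k))
      = fun u => ∑ j, ∑ k, B j k * (stdG u * (u j * u k)) := by
    funext u
    rw [Finset.mul_sum]
    congr 1 with j
    rw [Finset.mul_sum]
    congr 1 with k
    ring
  rw [e, MeasureTheory.integral_finset_sum _ (fun j _ => integrable_finset_sum _
    (fun k _ => (integrable_stdG_mul j k).const_mul _))]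
  have : ∀ j : ι, ∫ u : ι → ℝ, ∑ k, B j k * (stdG u * (u j * u k)) = B j j := by
    intro j
    rw [MeasureTheory.integral_finset_sum _
      (fun k _ => (integrable_stdG_mul j k).const_mul _)]
    have : ∀ k : ι, ∫ u : ι → ℝ, B j k * (stdG u * (u j * u k))
        = B j k * if j = k then 1 else 0 := by
      intro k
      rw [MeasureTheory.integral_const_mul, integral_stdG_mul]
    simp_rw [this]
    simp
  simp_rw [this]

section Affine
variable (M : Matrix ι ι ℝ) (c : ι → ℝ)

lemma measurable_affine : Measurable (fun u : ι → ℝ => c + M *ᵥ u) := by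
  have h : Continuous (fun u : ι → ℝ => M *ᵥ u) := by
    have := LinearMap.continuous_on_pi (Matrix.toLin' M)
    rwa [show ⇑(Matrix.toLin' M) = fun u => M *ᵥ u from funext (Matrix.toLin'_apply M)] at this
  exact (continuous_const.add h).measurable

lemma map_affine (hM : M.det ≠ 0) :
    Measure.map (fun u : ι → ℝ => c + M *ᵥ u) volume
      = ENNReal.ofReal |M.det|⁻¹ • volume := by
  have h1 : (fun u : ι → ℝ => c + M *ᵥ u) = (fun x => c + x) ∘ (Matrix.toLin' M) := by
    funext u; simp [Matrix.toLin'_apply]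
  have hcont : Continuous (Matrix.toLin' M : (ι → ℝ) →ₗ[ℝ] ι → ℝ) :=
    LinearMap.continuous_on_pi _
  rw [h1, ← Measure.map_map (measurable_const_add c) hcont.measurable,
    Real.map_matrix_volume_pi_eq_smul_volume_pi hM, Measure.map_smul,
    map_add_left_eq_self, abs_inv]

lemma integral_comp_affine (hM : M.det ≠ 0) {F : (ι → ℝ) → ℝ}
    (hF : AEStronglyMeasurable F volume) :
    ∫ x, F x = |M.det| * ∫ u, F (c + M *ᵥ u) := by
  have hFm : AEStronglyMeasurable F
      (Measure.map (fun u : ι → ℝ => c + M *ᵥ u) volume) := by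
    rw [map_affine M c hM]
    exact hF.mono_ac Measure.smul_absolutelyContinuous
  have h := MeasureTheory.integral_map (measurable_affine M c).aemeasurable hFm
  rw [map_affine M c hM, integral_smul_measure, ENNReal.toReal_ofReal (by positivity),
    smul_eq_mul] at h
  rw [← h, ← mul_assoc, mul_inv_cancel₀ (by simpa using hM), one_mul]

lemma integrable_comp_affine (hM : M.det ≠ 0) {F : (ι → ℝ) → ℝ}
    (hF : AEStronglyMeasurable F volume) :
    Integrable (fun u => F (c + M *ᵥ u)) ↔ Integrable F := by
  have hFm : AEStronglyMeasurable F
      (Measure.map (fun u : ι → ℝ => c + M *ᵥ u) volume) := by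
    rw [map_affine M c hM]
    exact hF.mono_ac Measure.smul_absolutelyContinuous
  rw [show (fun u : ι → ℝ => F (c + M *ᵥ u)) = F ∘ (fun u => c + M *ᵥ u) from rfl,
    ← integrable_map_measure hFm (measurable_affine M c).aemeasurable,
    map_affine M c hM,
    integrable_smul_measure (by simp [hM]) ENNReal.ofReal_ne_top]

end Affine

section LinAlg
variable {K : Matrix ι ι ℝ}

/-- extension of a vector on `G` by zero -/
def extG (G : Finset ι) (v : G → ℝ) : ι → ℝ := fun j => if h : j ∈ G then v ⟨j, h⟩ else 0

lemma extG_mem {G : Finset ι} (v : G → ℝ) {j : ι} (hj : j ∈ G) :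
    extG G v j = v ⟨j, hj⟩ := dif_pos hj

lemma extG_not_mem {G : Finset ι} (v : G → ℝ) {j : ι} (hj : j ∉ G) :
    extG G v j = 0 := dif_neg hj

lemma sum_mul_extG (G : Finset ι) (v : G → ℝ) (F : ι → ℝ) :
    ∑ j, F j * extG G v j = ∑ j : G, F j.1 * v j := by
  rw [← Finset.sum_subset (Finset.subset_univ G)
      (fun j _ hj => by rw [extG_not_mem v hj, mul_zero]),
    ← Finset.sum_attach G (fun j => F j * extG G v j), ← Finset.univ_eq_attach]
  refine Finset.sum_congr rfl (fun j _ => ?_)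
  rw [extG_mem v j.2]

lemma dot_mulVec_symm {A : Matrix ι ι ℝ} (hA : Aᵀ = A) (v w : ι → ℝ) :
    v ⬝ᵥ (A *ᵥ w) = w ⬝ᵥ (A *ᵥ v) := by
  rw [Matrix.dotProduct_mulVec]
  conv_lhs => rw [← hA]
  rw [Matrix.vecMul_transpose, dotProduct_comm]

variable (hK : K.PosDef)
include hK

lemma Ksymm : ∀ a b, K a b = K b a := fun a b => (star_trivial (K a b)).symm.trans (hK.isHermitian.apply b a)

lemma Ktr : Kᵀ = K := by
  ext a b
  exact Ksymm hK b a

lemma mulVec_extG (G : Finset ι) (v : G → ℝ) (j : ι) :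
    (K *ᵥ extG G v) j = ∑ k : G, K j k.1 * v k := by
  rw [show (K *ᵥ extG G v) j = ∑ k, K j k * extG G v k from rfl, sum_mul_extG]

omit hK in
lemma quad_extG (G : Finset ι) (v : G → ℝ) :
    extG G v ⬝ᵥ (K *ᵥ extG G v) = v ⬝ᵥ (subm K G *ᵥ v) := by
  rw [show extG G v ⬝ᵥ (K *ᵥ extG G v) = ∑ j, (K *ᵥ extG G v) j * extG G v j from
    Finset.sum_congr rfl (fun j _ => mul_comm _ _), sum_mul_extG]
  refine Finset.sum_congr rfl (fun j _ => ?_)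
  rw [show (K *ᵥ extG G v) j.1 = ∑ k, K j.1 k * extG G v k from rfl, sum_mul_extG, mul_comm]
  rfl

lemma subm_posDef (G : Finset ι) : (subm K G).PosDef := by
  refine Matrix.PosDef.of_dotProduct_mulVec_pos ?_ ?_
  · ext a b
    show star (subm K G b a) = subm K G a b
    show star (K b.1 a.1) = K a.1 b.1
    rw [star_trivial]
    exact Ksymm hK b.1 a.1
  · intro v hv
    have hv' : extG G v ≠ 0 := by
      intro h0
      apply hv
      funext j
      have := congrFun h0 j.1
      rwa [extG_mem v j.2, Subtype.coe_eta, Pi.zero_apply] at this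
    have h := hK.dotProduct_mulVec_pos hv'
    rw [star_trivial] at h ⊢
    rwa [← quad_extG]

lemma subm_det_ne (G : Finset ι) : (subm K G).det ≠ 0 := (subm_posDef hK G).det_pos.ne'

lemma subm_symm (G : Finset ι) : (subm K G)ᵀ = subm K G := by
  ext a b
  exact Ksymm hK b.1 a.1

lemma subm_inv_symm (G : Finset ι) : ((subm K G)⁻¹)ᵀ = (subm K G)⁻¹ := by
  rw [Matrix.transpose_nonsing_inv, subm_symm hK]

end LinAlg

section Resid
variable {K : Matrix ι ι ℝ}

/-- covariance vector -/
def cvec (K : Matrix ι ι ℝ) (G : Finset ι) (i : ι) : G → ℝ := fun j => K j.1 i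

/-- regression coefficients -/
def yvec (K : Matrix ι ι ℝ) (G : Finset ι) (i : ι) : G → ℝ := (subm K G)⁻¹ *ᵥ cvec K G i

/-- residual coefficient vector -/
def rvec (K : Matrix ι ι ℝ) (G : Finset ι) (i : ι) : ι → ℝ :=
  Pi.single i 1 - extG G (yvec K G i)

variable (hK : K.PosDef)
include hK

lemma mulVec_rvec_eq_zero (G : Finset ι) (i : ι) {j : ι} (hj : j ∈ G) :
    (K *ᵥ rvec K G i) j = 0 := by
  rw [rvec, Matrix.mulVec_sub, Pi.sub_apply, Matrix.mulVec_single, mulVec_extG hK]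
  have h1 : ∑ k : G, K j k.1 * yvec K G i k = (subm K G *ᵥ yvec K G i) ⟨j, hj⟩ := by
    refine (Finset.sum_congr rfl (fun k _ => ?_))
    rfl
  rw [h1, yvec, Matrix.mulVec_mulVec,
    Matrix.mul_nonsing_inv _ (isUnit_iff_ne_zero.mpr (subm_det_ne hK G)), Matrix.one_mulVec]
  show K j i * 1 - cvec K G i ⟨j, hj⟩ = 0
  rw [mul_one, cvec]
  ring

lemma dot_rvec_zero (G : Finset ι) (i : ι) {u : ι → ℝ} (hu : ∀ j, j ∉ G → u j = 0) :
    u ⬝ᵥ (K *ᵥ rvec K G i) = 0 := by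
  apply Finset.sum_eq_zero
  intro j _
  by_cases hj : j ∈ G
  · rw [mulVec_rvec_eq_zero hK G i hj, mul_zero]
  · rw [hu j hj, zero_mul]

lemma condVar_eq (G : Finset ι) (i : ι) :
    condVar K i G = rvec K G i ⬝ᵥ (K *ᵥ rvec K G i) := by
  have h0 : extG G (yvec K G i) ⬝ᵥ (K *ᵥ rvec K G i) = 0 :=
    dot_rvec_zero hK G i (fun j hj => extG_not_mem _ hj)
  have hsplit : rvec K G i ⬝ᵥ (K *ᵥ rvec K G i)
      = Pi.single i 1 ⬝ᵥ (K *ᵥ rvec K G i) - extG G (yvec K G i) ⬝ᵥ (K *ᵥ rvec K G i) := by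
    rw [← sub_dotProduct]
    rfl
  have h1 : rvec K G i ⬝ᵥ (K *ᵥ rvec K G i) = (K *ᵥ rvec K G i) i := by
    rw [hsplit, h0, sub_zero, single_dotProduct, one_mul]
  have h2 : (K *ᵥ rvec K G i) i = K i i - ∑ k : G, K i k.1 * yvec K G i k := by
    rw [rvec, Matrix.mulVec_sub, Pi.sub_apply, Matrix.mulVec_single, mulVec_extG hK]
    show K i i * 1 - _ = _
    simp only [mul_one]
  rw [h1, h2]
  rfl

lemma condVar_pos (G : Finset ι) (i : ι) (hi : i ∉ G) : 0 < condVar K i G := by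
  rw [condVar_eq hK]
  have hne : rvec K G i ≠ 0 := by
    intro h0
    have := congrFun h0 i
    rw [rvec, Pi.sub_apply, Pi.single_eq_same, extG_not_mem _ hi, Pi.zero_apply] at this
    norm_num at this
  have := hK.dotProduct_mulVec_pos hne
  rwa [star_trivial] at this

lemma condVar_anti {G₁ G₂ : Finset ι} (i : ι) (h12 : G₁ ⊆ G₂) :
    condVar K i G₂ ≤ condVar K i G₁ := by
  set r₁ := rvec K G₁ i with hr₁
  set r₂ := rvec K G₂ i with hr₂
  set u := r₁ - r₂ with hu
  have husupp : ∀ j, j ∉ G₂ → u j = 0 := by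
    intro j hj
    have hj1 : j ∉ G₁ := fun h => hj (h12 h)
    simp only [hu, hr₁, hr₂, rvec, Pi.sub_apply, extG_not_mem _ hj, extG_not_mem _ hj1]
    ring
  have hKtr := Ktr hK
  have expand : r₁ ⬝ᵥ (K *ᵥ r₁)
      = r₂ ⬝ᵥ (K *ᵥ r₂) + 2 * (u ⬝ᵥ (K *ᵥ r₂)) + u ⬝ᵥ (K *ᵥ u) := by
    have hr : r₁ = r₂ + u := by rw [hu]; abel
    rw [hr, Matrix.mulVec_add, add_dotProduct, dotProduct_add,
      dotProduct_add, dot_mulVec_symm hKtr r₂ u]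
    ring
  have h0 : u ⬝ᵥ (K *ᵥ r₂) = 0 := dot_rvec_zero hK G₂ i husupp
  have hpsd : 0 ≤ u ⬝ᵥ (K *ᵥ u) := by
    have := hK.posSemidef.dotProduct_mulVec_nonneg u
    rwa [star_trivial] at this
  rw [condVar_eq hK G₁ i, condVar_eq hK G₂ i, expand, h0]
  linarith

lemma condMean_sub (μ : ι → ℝ) (G : Finset ι) (i : ι) (x : ι → ℝ) :
    x i - condMean μ K i G x = rvec K G i ⬝ᵥ (x - μ) := by
  rw [condMean]
  have hc : (fun j : G => K i j.1) = cvec K G i := funext fun j => Ksymm hK i j.1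
  rw [hc, dot_mulVec_symm (subm_inv_symm hK G)]
  have h2 : (fun j : G => x j.1 - μ j.1) ⬝ᵥ ((subm K G)⁻¹ *ᵥ cvec K G i)
      = extG G (yvec K G i) ⬝ᵥ (x - μ) := by
    rw [show extG G (yvec K G i) ⬝ᵥ (x - μ) = ∑ j, (x - μ) j * extG G (yvec K G i) j from
      Finset.sum_congr rfl (fun j _ => mul_comm _ _), sum_mul_extG]
    rfl
  rw [h2, rvec, sub_dotProduct, single_dotProduct, one_mul, Pi.sub_apply]
  ring

end Resid

section Gauss
open scoped MatrixOrder
variable {K : Matrix ι ι ℝ}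

lemma symm_dot_shift {A : Matrix ι ι ℝ} (hA : Aᵀ = A) (u w : ι → ℝ) :
    (A *ᵥ u) ⬝ᵥ w = u ⬝ᵥ (A *ᵥ w) := by
  rw [← Matrix.vecMul_transpose, hA, ← Matrix.dotProduct_mulVec]

variable (hK : K.PosDef)

/-- symmetric square root of `K` -/
def sqK (hK : K.PosDef) : Matrix ι ι ℝ := CFC.sqrt K

lemma sqK_mul : sqK hK * sqK hK = K := CFC.sqrt_mul_sqrt_self K hK.posSemidef.nonneg

lemma sqK_symm : (sqK hK)ᵀ = sqK hK := by
  ext a b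
  exact (star_trivial _).symm.trans ((CFC.sqrt_nonneg K).posSemidef.isHermitian.apply a b)

lemma sqK_det_ne : (sqK hK).det ≠ 0 := by
  intro h
  have : K.det = 0 := by rw [← sqK_mul hK, Matrix.det_mul, h, mul_zero]
  exact hK.det_pos.ne' this

lemma sqK_det_abs : Real.sqrt K.det = |(sqK hK).det| := by
  have h : K.det = |(sqK hK).det| ^ 2 := by
    rw [sq_abs, sq, ← Matrix.det_mul, sqK_mul hK]
  rw [h, Real.sqrt_sq (abs_nonneg _)]

lemma sqK_isUnit_det : IsUnit (sqK hK).det := isUnit_iff_ne_zero.mpr (sqK_det_ne hK)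

lemma sqK_KinvL : sqK hK * K⁻¹ * sqK hK = 1 := by
  have h : K⁻¹ = (sqK hK)⁻¹ * (sqK hK)⁻¹ := by
    conv_lhs => rw [← sqK_mul hK]
    exact Matrix.mul_inv_rev _ _
  rw [h, ← Matrix.mul_assoc, Matrix.mul_nonsing_inv _ (sqK_isUnit_det hK), Matrix.one_mul,
    Matrix.nonsing_inv_mul _ (sqK_isUnit_det hK)]

lemma sqK_quad (u : ι → ℝ) : (sqK hK *ᵥ u) ⬝ᵥ (K⁻¹ *ᵥ (sqK hK *ᵥ u)) = u ⬝ᵥ u := by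
  rw [symm_dot_shift (sqK_symm hK), Matrix.mulVec_mulVec, Matrix.mulVec_mulVec,
    sqK_KinvL hK, Matrix.one_mulVec]

lemma sqK_dot (w : ι → ℝ) : (sqK hK *ᵥ w) ⬝ᵥ (sqK hK *ᵥ w) = w ⬝ᵥ (K *ᵥ w) := by
  rw [symm_dot_shift (sqK_symm hK), Matrix.mulVec_mulVec, sqK_mul hK]

lemma gaussDensity_comp (μ : ι → ℝ) (u : ι → ℝ) :
    gaussDensity μ K (μ + sqK hK *ᵥ u) = |(sqK hK).det|⁻¹ * stdG u := by
  have h2π : (0:ℝ) < 2 * π := by positivity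
  rw [gaussDensity, add_sub_cancel_left, sqK_quad hK]
  have hconst : Real.sqrt ((2 * π) ^ (Fintype.card ι) * K.det)
      = Real.sqrt (2 * π) ^ (Fintype.card ι) * |(sqK hK).det| := by
    rw [Real.sqrt_mul (by positivity), sqK_det_abs hK]
    congr 1
    rw [← Real.sqrt_sq (pow_nonneg (Real.sqrt_nonneg _) _), ← pow_right_comm,
      Real.sq_sqrt h2π.le]
  have hexp : Real.exp (-(u ⬝ᵥ u) / 2) = ∏ i, Real.exp (-((u i - 0) ^ 2) / (2 * 1)) := by
    rw [← Real.exp_sum]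
    congr 1
    rw [dotProduct, neg_div, Finset.sum_div, ← Finset.sum_neg_distrib]
    refine Finset.sum_congr rfl (fun i _ => ?_)
    rw [sub_zero, mul_one, sq]
    ring
  rw [hconst, hexp, stdG]
  unfold gauss1
  simp only [mul_one]
  rw [Finset.prod_mul_distrib, Finset.prod_const, Finset.card_univ, mul_inv, ← inv_pow]
  ring

end Gauss

section Transfer
variable {K : Matrix ι ι ℝ} (hK : K.PosDef) (μ : ι → ℝ)

lemma continuous_quadform (A : Matrix ι ι ℝ) :
    Continuous (fun x : ι → ℝ => (x - μ) ⬝ᵥ (A *ᵥ (x - μ))) := by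
  show Continuous fun x : ι → ℝ => ∑ j, (x j - μ j) * ∑ k, A j k * (x k - μ k)
  refine continuous_finset_sum _ (fun j _ => Continuous.mul ?_ ?_)
  · exact (continuous_apply j).sub continuous_const
  · exact continuous_finset_sum _ (fun k _ =>
      continuous_const.mul ((continuous_apply k).sub continuous_const))

lemma continuous_gaussDensity : Continuous (gaussDensity μ K) := by
  unfold gaussDensity
  exact continuous_const.mul (Real.continuous_exp.comp
    (((continuous_quadform μ K⁻¹).neg).div_const 2))

lemma continuous_lindot (w : ι → ℝ) : Continuous (fun x : ι → ℝ => w ⬝ᵥ (x - μ)) := by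
  show Continuous fun x : ι → ℝ => ∑ j, w j * (x j - μ j)
  exact continuous_finset_sum _ (fun j _ =>
    continuous_const.mul ((continuous_apply j).sub continuous_const))

lemma gauss_transfer_integral {h : (ι → ℝ) → ℝ} (hcont : Continuous h) :
    ∫ x, gaussDensity μ K x * h x = ∫ u, stdG u * h (μ + sqK hK *ᵥ u) := by
  have hmeas : AEStronglyMeasurable (fun x => gaussDensity μ K x * h x) volume :=
    ((continuous_gaussDensity μ).mul hcont).aestronglyMeasurable
  rw [integral_comp_affine (sqK hK) μ (sqK_det_ne hK) hmeas]
  have hpt : ∀ u, gaussDensity μ K (μ + sqK hK *ᵥ u) * h (μ + sqK hK *ᵥ u)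
      = |(sqK hK).det|⁻¹ * (stdG u * h (μ + sqK hK *ᵥ u)) := by
    intro u
    rw [gaussDensity_comp hK μ u]
    ring
  simp_rw [hpt]
  rw [MeasureTheory.integral_const_mul, ← mul_assoc,
    mul_inv_cancel₀ (abs_ne_zero.mpr (sqK_det_ne hK)), one_mul]

lemma gauss_transfer_integrable {h : (ι → ℝ) → ℝ} (hcont : Continuous h) :
    Integrable (fun x => gaussDensity μ K x * h x)
      ↔ Integrable (fun u => stdG u * h (μ + sqK hK *ᵥ u)) := by
  have hmeas : AEStronglyMeasurable (fun x => gaussDensity μ K x * h x) volume :=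
    ((continuous_gaussDensity μ).mul hcont).aestronglyMeasurable
  rw [← integrable_comp_affine (sqK hK) μ (sqK_det_ne hK) hmeas]
  have hpt : (fun u : ι → ℝ => gaussDensity μ K (μ + sqK hK *ᵥ u) * h (μ + sqK hK *ᵥ u))
      = fun u => |(sqK hK).det|⁻¹ * (stdG u * h (μ + sqK hK *ᵥ u)) := by
    funext u
    rw [gaussDensity_comp hK μ u]
    ring
  rw [show (fun u : ι → ℝ => (fun x => gaussDensity μ K x * h x) (μ + sqK hK *ᵥ u))
      = fun u : ι → ℝ => gaussDensity μ K (μ + sqK hK *ᵥ u) * h (μ + sqK hK *ᵥ u) from rfl,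
    hpt, integrable_const_mul_iff (isUnit_iff_ne_zero.mpr
      (inv_ne_zero (abs_ne_zero.mpr (sqK_det_ne hK))))]

include hK in
lemma integrable_gaussDensity : Integrable (gaussDensity μ K) := by
  have h := (gauss_transfer_integrable hK μ (continuous_const : Continuous fun _ : ι → ℝ => (1:ℝ))).mpr
  simp only [mul_one] at h
  exact h integrable_stdG

include hK in
lemma integral_gaussDensity : ∫ x, gaussDensity μ K x = 1 := by
  have h := gauss_transfer_integral hK μ (continuous_const : Continuous fun _ : ι → ℝ => (1:ℝ))
  simp only [mul_one] at h
  rw [h, integral_stdG]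

lemma sq_dot_expand (a u : ι → ℝ) :
    (a ⬝ᵥ u) ^ 2 = ∑ j, ∑ k, (a j * a k) * (u j * u k) := by
  rw [sq, dotProduct, Finset.sum_mul_sum]
  refine Finset.sum_congr rfl (fun j _ => Finset.sum_congr rfl (fun k _ => by ring))

include hK in
lemma integrable_gauss_sq (w : ι → ℝ) :
    Integrable (fun x => gaussDensity μ K x * (w ⬝ᵥ (x - μ)) ^ 2) := by
  rw [gauss_transfer_integrable hK μ (h := fun x => (w ⬝ᵥ (x - μ)) ^ 2) (((continuous_lindot μ w)).pow 2)]
  have hpt : (fun u : ι → ℝ => stdG u * (w ⬝ᵥ (μ + sqK hK *ᵥ u - μ)) ^ 2)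
      = fun u => stdG u * ∑ j, ∑ k, ((sqK hK *ᵥ w) j * (sqK hK *ᵥ w) k) * (u j * u k) := by
    funext u
    rw [add_sub_cancel_left, ← symm_dot_shift (sqK_symm hK), sq_dot_expand]
  rw [hpt]
  exact integrable_stdG_quad _

include hK in
lemma integral_gauss_sq (w : ι → ℝ) :
    ∫ x, gaussDensity μ K x * (w ⬝ᵥ (x - μ)) ^ 2 = w ⬝ᵥ (K *ᵥ w) := by
  rw [gauss_transfer_integral hK μ (h := fun x => (w ⬝ᵥ (x - μ)) ^ 2) ((continuous_lindot μ w).pow 2)]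
  have hpt : (fun u : ι → ℝ => stdG u * (w ⬝ᵥ (μ + sqK hK *ᵥ u - μ)) ^ 2)
      = fun u => stdG u * ∑ j, ∑ k, ((sqK hK *ᵥ w) j * (sqK hK *ᵥ w) k) * (u j * u k) := by
    funext u
    rw [add_sub_cancel_left, ← symm_dot_shift (sqK_symm hK), sq_dot_expand]
  rw [hpt, integral_stdG_quad]
  rw [← sqK_dot hK w]
  rfl

include hK in
lemma integrable_gauss_quad :
    Integrable (fun x => gaussDensity μ K x * ((x - μ) ⬝ᵥ (K⁻¹ *ᵥ (x - μ)))) := by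
  rw [gauss_transfer_integrable hK μ (continuous_quadform μ K⁻¹)]
  have hpt : (fun u : ι → ℝ =>
      stdG u * ((μ + sqK hK *ᵥ u - μ) ⬝ᵥ (K⁻¹ *ᵥ (μ + sqK hK *ᵥ u - μ))))
      = fun u => stdG u * ∑ j, ∑ k, ((if j = k then (1:ℝ) else 0)) * (u j * u k) := by
    funext u
    rw [add_sub_cancel_left, sqK_quad hK]
    congr 1
    rw [dotProduct]
    refine Finset.sum_congr rfl (fun j _ => ?_)
    rw [show (∑ k, (if j = k then (1:ℝ) else 0) * (u j * u k))
        = ∑ k, if j = k then u j * u k else 0 from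
      Finset.sum_congr rfl (fun k _ => by split_ifs <;> ring),
      Finset.sum_ite_eq, if_pos (Finset.mem_univ j)]
  rw [hpt]
  exact integrable_stdG_quad _

end Transfer

section Assemble
variable {K : Matrix ι ι ℝ} (hK : K.PosDef) (μ : ι → ℝ)

include hK

lemma gaussDensity_pos (x : ι → ℝ) : 0 < gaussDensity μ K x := by
  have hdet := hK.det_pos
  exact mul_pos (inv_pos.mpr (Real.sqrt_pos.mpr
    (mul_pos (pow_pos (by positivity) _) hdet))) (Real.exp_pos _)

lemma log_gaussDensity (x : ι → ℝ) : Real.log (gaussDensity μ K x)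
    = Real.log ((Real.sqrt ((2 * π) ^ (Fintype.card ι) * K.det))⁻¹)
      - ((x - μ) ⬝ᵥ (K⁻¹ *ᵥ (x - μ))) / 2 := by
  have hdet := hK.det_pos
  unfold gaussDensity
  rw [Real.log_mul (by positivity) (Real.exp_ne_zero _), Real.log_exp, neg_div]
  ring

omit hK in
lemma gauss1_pos {m v t : ℝ} (hv : 0 < v) : 0 < gauss1 m v t :=
  mul_pos (inv_pos.mpr (Real.sqrt_pos.mpr (by positivity))) (Real.exp_pos _)

omit hK in
lemma log_gauss1 {m v t : ℝ} (hv : 0 < v) :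
    Real.log (gauss1 m v t) = -Real.log (Real.sqrt (2 * π * v)) - (t - m) ^ 2 / (2 * v) := by
  unfold gauss1
  rw [Real.log_mul (by positivity) (Real.exp_ne_zero _), Real.log_exp, Real.log_inv, neg_div]
  ring

lemma condDens_pos {G : Finset ι} {i : ι} (hi : i ∉ G) (x : ι → ℝ) :
    0 < condDens μ K i G x :=
  gauss1_pos (condVar_pos hK G i hi)

lemma f_mul_log_condDens {G : Finset ι} {i : ι} (hi : i ∉ G) :
    (fun x => gaussDensity μ K x * Real.log (condDens μ K i G x))
    = fun x => (-Real.log (Real.sqrt (2 * π * condVar K i G))) * gaussDensity μ K x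
      - (1 / (2 * condVar K i G)) * (gaussDensity μ K x * (rvec K G i ⬝ᵥ (x - μ)) ^ 2) := by
  funext x
  rw [condDens, log_gauss1 (condVar_pos hK G i hi), ← condMean_sub hK μ G i x]
  have hv := (condVar_pos hK G i hi).ne'
  field_simp

lemma integrable_f_log_condDens {G : Finset ι} {i : ι} (hi : i ∉ G) :
    Integrable (fun x => gaussDensity μ K x * Real.log (condDens μ K i G x)) := by
  rw [f_mul_log_condDens hK μ hi]
  exact (((integrable_gaussDensity hK μ).const_mul _)).sub
    (((integrable_gauss_sq hK μ (rvec K G i)).const_mul _))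

lemma integral_f_log_condDens {G : Finset ι} {i : ι} (hi : i ∉ G) :
    ∫ x, gaussDensity μ K x * Real.log (condDens μ K i G x)
      = -(Real.log (Real.sqrt (2 * π * condVar K i G)) + 1 / 2) := by
  rw [f_mul_log_condDens hK μ hi,
    MeasureTheory.integral_sub (((integrable_gaussDensity hK μ).const_mul _))
      (((integrable_gauss_sq hK μ (rvec K G i)).const_mul _)),
    MeasureTheory.integral_const_mul, MeasureTheory.integral_const_mul,
    integral_gaussDensity hK μ, integral_gauss_sq hK μ (rvec K G i),
    ← condVar_eq hK G i, mul_one]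
  have hv := (condVar_pos hK G i hi).ne'
  field_simp
  ring

lemma integrable_f_log_f :
    Integrable (fun x => gaussDensity μ K x * Real.log (gaussDensity μ K x)) := by
  have hpt : (fun x => gaussDensity μ K x * Real.log (gaussDensity μ K x))
      = fun x => (Real.log ((Real.sqrt ((2 * π) ^ (Fintype.card ι) * K.det))⁻¹))
          * gaussDensity μ K x
        - (1 / 2) * (gaussDensity μ K x * ((x - μ) ⬝ᵥ (K⁻¹ *ᵥ (x - μ)))) := by
    funext x
    rw [log_gaussDensity hK μ x]
    ring
  rw [hpt]
  exact (((integrable_gaussDensity hK μ).const_mul _)).sub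
    ((integrable_gauss_quad hK μ).const_mul _)

lemma vecchia_pos {g : ι → Finset ι} (hg : ∀ i, i ∉ g i) (x : ι → ℝ) :
    0 < vecchia μ K g x :=
  Finset.prod_pos (fun i _ => condDens_pos hK μ (hg i) x)

lemma KL_formula {g : ι → Finset ι} (hg : ∀ i, i ∉ g i) :
    KLdiv (gaussDensity μ K) (vecchia μ K g)
      = (∫ x, gaussDensity μ K x * Real.log (gaussDensity μ K x))
        + ∑ i, (Real.log (Real.sqrt (2 * π * condVar K i (g i))) + 1 / 2) := by
  unfold KLdiv
  have hpt : ∀ x, gaussDensity μ K x * Real.log (gaussDensity μ K x / vecchia μ K g x)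
      = gaussDensity μ K x * Real.log (gaussDensity μ K x)
        - ∑ i, gaussDensity μ K x * Real.log (condDens μ K i (g i) x) := by
    intro x
    rw [Real.log_div (gaussDensity_pos hK μ x).ne' (vecchia_pos hK μ hg x).ne',
      vecchia, Real.log_prod (fun i _ => (condDens_pos hK μ (hg i) x).ne'),
      mul_sub, Finset.mul_sum]
  simp_rw [hpt]
  rw [MeasureTheory.integral_sub (integrable_f_log_f hK μ)
      (integrable_finset_sum _ (fun i _ => integrable_f_log_condDens hK μ (hg i))),
    MeasureTheory.integral_finset_sum _ (fun i _ => integrable_f_log_condDens hK μ (hg i))]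
  simp_rw [fun i => integral_f_log_condDens hK μ (hg i)]
  rw [Finset.sum_neg_distrib, sub_neg_eq_add]

end Assemble

end VA

/-- **Proposition 1, part 1.** If the conditioning vectors of one Vecchia approximation are
contained in those of another, then its KL divergence from the exact Gaussian density is at
least as large. -/
theorem kl_antitone_in_conditioning_sets
    {N : ℕ} (μ : Fin N → ℝ) (K : Matrix (Fin N) (Fin N) ℝ) (hK : K.PosDef)
    (g₁ g₂ : Fin N → Finset (Fin N))
    (hg₁ : ∀ i, g₁ i ⊆ Finset.Iio i) (hg₂ : ∀ i, g₂ i ⊆ Finset.Iio i)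
    (h : ∀ i, g₁ i ⊆ g₂ i) :
    KLdiv (gaussDensity μ K) (vecchia μ K g₂) ≤ KLdiv (gaussDensity μ K) (vecchia μ K g₁) := by
  have hne : ∀ (g : Fin N → Finset (Fin N)), (∀ i, g i ⊆ Finset.Iio i) → ∀ i, i ∉ g i := by
    intro g hg i hm
    exact absurd (Finset.mem_Iio.mp (hg i hm)) (lt_irrefl i)
  rw [VA.KL_formula hK μ (hne g₁ hg₁), VA.KL_formula hK μ (hne g₂ hg₂)]
  apply add_le_add_right
  apply Finset.sum_le_sum
  intro i _
  have hv2 : 0 < condVar K i (g₂ i) := VA.condVar_pos hK (g₂ i) i (hne g₂ hg₂ i)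
  have hmono : condVar K i (g₂ i) ≤ condVar K i (g₁ i) := VA.condVar_anti hK i (h i)
  have h2π : (0:ℝ) < 2 * π := by positivity
  have hsq : Real.sqrt (2 * π * condVar K i (g₂ i)) ≤ Real.sqrt (2 * π * condVar K i (g₁ i)) :=
    Real.sqrt_le_sqrt (by nlinarith)
  have hpos : 0 < Real.sqrt (2 * π * condVar K i (g₂ i)) :=
    Real.sqrt_pos.mpr (by positivity)
  exact add_le_add_left (Real.log_le_log hpos hsq) _


end
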